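/- Let Y be a standard Gaussian vector in R^n, theta in R^k with ||theta||_infinity <= M, and lambda > 0. If P(| ||Y|| - sqrt(n) | >= lambda/M) <= delta and, for all theta' in R^k, P(W^T Y in Rect(theta' + lambda*1) \ Rect(theta' - lambda*1)) <= q, then |P(W^T Y in ||Y|| * Rect(theta)) - P(W^T Y in sqrt(n) * Rect(theta))| <= delta + q. -/

import Mathlib

open MeasureTheory ProbabilityTheory

/-- `Rect θ` is the set `(-∞, θ 1] × ⋯ × (-∞, θ k]`. -/
def Rect {k : ℕ} (θ : Fin k → ℝ) : Set (Fin k → ℝ) := {a | ∀ p, a p ≤ θ p}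

theorem stmt_15 (n k : ℕ) (W : Fin n → Fin k → ℝ) (θ : Fin k → ℝ)
    (M lam δ q : ℝ) (hM : 0 < M) (hlam : 0 < lam) (hδ : 0 ≤ δ) (hq : 0 ≤ q)
    (hθ : ∀ p, |θ p| ≤ M)
    (hnorm : (Measure.pi fun _ : Fin n => gaussianReal 0 1)
        {y | lam / M ≤ |Real.sqrt (∑ i, (y i) ^ 2) - Real.sqrt n|} ≤ ENNReal.ofReal δ)
    (hanti : ∀ θ' : Fin k → ℝ,
      (Measure.pi fun _ : Fin n => gaussianReal 0 1)
        {y | (fun p => ∑ i, W i p * y i) ∈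
          Rect (fun p => θ' p + lam) \ Rect (fun p => θ' p - lam)} ≤ ENNReal.ofReal q) :
    |((Measure.pi fun _ : Fin n => gaussianReal 0 1)
        {y | (fun p => ∑ i, W i p * y i) ∈
          Rect (fun p => Real.sqrt (∑ i, (y i) ^ 2) * θ p)}).toReal -
      ((Measure.pi fun _ : Fin n => gaussianReal 0 1)
        {y | (fun p => ∑ i, W i p * y i) ∈
          Rect (fun p => Real.sqrt n * θ p)}).toReal| ≤ δ + q := by
  set μ : Measure (Fin n → ℝ) := Measure.pi fun _ : Fin n => gaussianReal 0 1 with hμ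
  set A : Set (Fin n → ℝ) := {y | (fun p => ∑ i, W i p * y i) ∈
      Rect (fun p => Real.sqrt (∑ i, (y i) ^ 2) * θ p)} with hA
  set B : Set (Fin n → ℝ) := {y | (fun p => ∑ i, W i p * y i) ∈
      Rect (fun p => Real.sqrt n * θ p)} with hB
  set E : Set (Fin n → ℝ) :=
      {y | lam / M ≤ |Real.sqrt (∑ i, (y i) ^ 2) - Real.sqrt n|} with hE
  set C : Set (Fin n → ℝ) := {y | (fun p => ∑ i, W i p * y i) ∈
      Rect (fun p => Real.sqrt n * θ p + lam) \ Rect (fun p => Real.sqrt n * θ p - lam)}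
    with hC
  have hCle : μ C ≤ ENNReal.ofReal q := hanti (fun p => Real.sqrt n * θ p)
  have hclose : ∀ y : Fin n → ℝ, y ∉ E → ∀ p,
      |Real.sqrt (∑ i, (y i) ^ 2) * θ p - Real.sqrt n * θ p| < lam := by
    intro y hy p
    have h1 : |Real.sqrt (∑ i, (y i) ^ 2) - Real.sqrt n| < lam / M := not_le.mp hy
    have h2 : |Real.sqrt (∑ i, (y i) ^ 2) * θ p - Real.sqrt n * θ p|
        = |Real.sqrt (∑ i, (y i) ^ 2) - Real.sqrt n| * |θ p| := by
      rw [← abs_mul, sub_mul]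
    rw [h2]
    calc |Real.sqrt (∑ i, (y i) ^ 2) - Real.sqrt n| * |θ p|
        ≤ |Real.sqrt (∑ i, (y i) ^ 2) - Real.sqrt n| * M :=
          mul_le_mul_of_nonneg_left (hθ p) (abs_nonneg _)
      _ < (lam / M) * M := mul_lt_mul_of_pos_right h1 hM
      _ = lam := div_mul_cancel₀ _ (ne_of_gt hM)
  have hsub1 : A \ B ⊆ E ∪ C := by
    intro y hy
    simp only [hA, hB, Rect, Set.mem_diff, Set.mem_setOf_eq, not_forall, not_le] at hy
    by_cases hyE : y ∈ E
    · exact Or.inl hyE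
    refine Or.inr ?_
    simp only [hC, Rect, Set.mem_diff, Set.mem_setOf_eq, not_forall, not_le]
    constructor
    · intro p
      obtain ⟨hl, hr⟩ := abs_lt.mp (hclose y hyE p)
      linarith [hy.1 p]
    · obtain ⟨p, hp⟩ := hy.2
      exact ⟨p, by linarith⟩
  have hsub2 : B \ A ⊆ E ∪ C := by
    intro y hy
    simp only [hA, hB, Rect, Set.mem_diff, Set.mem_setOf_eq, not_forall, not_le] at hy
    by_cases hyE : y ∈ E
    · exact Or.inl hyE
    refine Or.inr ?_
    simp only [hC, Rect, Set.mem_diff, Set.mem_setOf_eq, not_forall, not_le]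
    constructor
    · intro p
      linarith [hy.1 p]
    · obtain ⟨p, hp⟩ := hy.2
      obtain ⟨hl, hr⟩ := abs_lt.mp (hclose y hyE p)
      exact ⟨p, by linarith⟩
  have hEC : μ (E ∪ C) ≤ ENNReal.ofReal δ + ENNReal.ofReal q :=
    (measure_union_le E C).trans (add_le_add hnorm hCle)
  have hAB : μ A ≤ μ B + (ENNReal.ofReal δ + ENNReal.ofReal q) := by
    calc μ A ≤ μ (A \ B ∪ B) := measure_mono (Set.subset_diff_union A B)
      _ ≤ μ (A \ B) + μ B := measure_union_le _ _
      _ ≤ (ENNReal.ofReal δ + ENNReal.ofReal q) + μ B :=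
          add_le_add_left ((measure_mono hsub1).trans hEC) _
      _ = μ B + (ENNReal.ofReal δ + ENNReal.ofReal q) := add_comm _ _
  have hBA : μ B ≤ μ A + (ENNReal.ofReal δ + ENNReal.ofReal q) := by
    calc μ B ≤ μ (B \ A ∪ A) := measure_mono (Set.subset_diff_union B A)
      _ ≤ μ (B \ A) + μ A := measure_union_le _ _
      _ ≤ (ENNReal.ofReal δ + ENNReal.ofReal q) + μ A :=
          add_le_add_left ((measure_mono hsub2).trans hEC) _
      _ = μ A + (ENNReal.ofReal δ + ENNReal.ofReal q) := add_comm _ _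
  have hμA : μ A ≠ ⊤ := measure_ne_top μ A
  have hμB : μ B ≠ ⊤ := measure_ne_top μ B
  rw [abs_sub_le_iff]
  constructor
  · have := ENNReal.toReal_mono (by finiteness) hAB
    rw [ENNReal.toReal_add hμB (by finiteness), ENNReal.toReal_add
      ENNReal.ofReal_ne_top ENNReal.ofReal_ne_top, ENNReal.toReal_ofReal hδ,
      ENNReal.toReal_ofReal hq] at this
    linarith
  · have := ENNReal.toReal_mono (by finiteness) hBA
    rw [ENNReal.toReal_add hμA (by finiteness), ENNReal.toReal_add
      ENNReal.ofReal_ne_top ENNReal.ofReal_ne_top, ENNReal.toReal_ofReal hδ,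
      ENNReal.toReal_ofReal hq] at this
    linarith
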